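/- Let V be a finite-dimensional complex inner product space and let F be a linear operator on V with Re ⟪φ, F φ⟫ > 0 for every nonzero φ ∈ V. Then | ∫_{(0,2π)} ⟪ψ, (F − i·cot(α/2)·1)^{-1} ψ⟫ dα | ≤ 2π ‖ψ‖² for every ψ ∈ V. -/

import Mathlib

open MeasureTheory Complex

section Aux

variable {V : Type*} [NormedAddCommGroup V] [InnerProductSpace ℂ V] [FiniteDimensional ℂ V]

lemma aux_isUnit (T : V →L[ℂ] V) (h : ∀ v, T v = 0 → v = 0) : IsUnit T := by
  rw [ContinuousLinearMap.isUnit_iff_bijective]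
  have hinj : Function.Injective T := by
    intro x y hxy
    have : T (x - y) = 0 := by rw [map_sub, hxy, sub_self]
    exact sub_eq_zero.1 (h _ this)
  exact ⟨hinj, (LinearMap.injective_iff_surjective (f := (T : V →ₗ[ℂ] V))).1 hinj⟩

lemma aux_ring_inverse_eq {M₀ : Type*} [MonoidWithZero M₀] {a b : M₀}
    (ha : IsUnit a) (h : a * b = 1) : Ring.inverse a = b := by
  calc Ring.inverse a = Ring.inverse a * (a * b) := by rw [h, mul_one]
  _ = (Ring.inverse a * a) * b := by rw [mul_assoc]
  _ = b := by rw [Ring.inverse_mul_cancel _ ha, one_mul]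

lemma aux_cot_identity {α : ℝ} (hs : Real.sin (α/2) ≠ 0) :
    (Complex.I * (Real.cot (α/2) : ℂ)) * (Complex.exp (α * Complex.I) - 1)
      = -(Complex.exp (α * Complex.I) + 1) := by
  have pyth : (Real.cos (α/2) : ℂ)^2 + (Real.sin (α/2) : ℂ)^2 = 1 := by
    norm_cast
    exact_mod_cast Real.cos_sq_add_sin_sq (α/2)
  have h2 : Complex.exp ((α/2 : ℝ) * Complex.I)
      = (Real.cos (α/2) : ℂ) + (Real.sin (α/2) : ℂ) * Complex.I := by
    rw [Complex.exp_mul_I, Complex.ofReal_cos, Complex.ofReal_sin]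
  have hexp : Complex.exp (α * Complex.I)
      = ((Real.cos (α/2) : ℂ) + (Real.sin (α/2) : ℂ) * Complex.I) ^ 2 := by
    rw [sq, ← h2, ← Complex.exp_add]
    congr 1
    push_cast
    ring
  have hs' : (Real.sin (α/2) : ℂ) ≠ 0 := by exact_mod_cast hs
  rw [hexp, Real.cot_eq_cos_div_sin, Complex.ofReal_div]
  set c := (Real.cos (α/2) : ℂ)
  set s := (Real.sin (α/2) : ℂ)
  field_simp
  linear_combination (Complex.I * c - s) * pyth + (2*c^2*s + s^3 + Complex.I*c*s^2) * Complex.I_sq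

lemma aux_re_symm (x y : V) : ((inner ℂ x y : ℂ)).re = ((inner ℂ y x : ℂ)).re := by
  rw [← inner_conj_symm x y, Complex.conj_re]

end Aux

theorem stmt_10 {V : Type*} [NormedAddCommGroup V] [InnerProductSpace ℂ V]
    [FiniteDimensional ℂ V]
    (F : V →L[ℂ] V)
    (hF : ∀ φ : V, φ ≠ 0 → 0 < ((inner ℂ φ (F φ) : ℂ)).re) (ψ : V) :
    ‖(∫ α in Set.Ioo (0 : ℝ) (2 * Real.pi),
        (inner ℂ ψ ((Ring.inverse
          (F - (Complex.I * (Real.cot (α / 2) : ℂ)) • (1 : V →L[ℂ] V))) ψ) : ℂ))‖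
      ≤ 2 * Real.pi * ‖ψ‖ ^ 2 := by
  classical
  -- basic accretivity facts
  have hFre : ∀ φ : V, 0 ≤ ((inner ℂ φ (F φ) : ℂ)).re := by
    intro φ
    rcases eq_or_ne φ 0 with rfl | hφ
    · simp
    · exact (hF φ hφ).le
  -- G = F + 1 is a unit
  set G : V →L[ℂ] V := F + 1 with hGdef
  have hGapp : ∀ φ : V, G φ = F φ + φ := by
    intro φ; simp [hGdef]
  have hGu : IsUnit G := by
    apply aux_isUnit
    intro v hv
    by_contra hv0
    have h1 : F v = -v := by
      have := hGapp v
      rw [hv] at this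
      linear_combination (norm := abel) -this
    have h2 := hF v hv0
    rw [h1] at h2
    simp [inner_neg_right, inner_self_eq_norm_sq_to_K] at h2
    rw [← Complex.ofReal_pow, Complex.ofReal_re] at h2
    nlinarith [sq_nonneg ‖v‖]
  set Ginv : V →L[ℂ] V := Ring.inverse G with hGinvdef
  have hGGinv : G * Ginv = 1 := Ring.mul_inverse_cancel _ hGu
  have hGinvG : Ginv * G = 1 := Ring.inverse_mul_cancel _ hGu
  have hGGinv_app : ∀ x : V, G (Ginv x) = x := by
    intro x
    have := congrArg (fun T : V →L[ℂ] V => T x) hGGinv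
    simpa [ContinuousLinearMap.mul_apply] using this
  -- norms
  have hplus : ∀ φ : V, ‖φ‖ ^ 2 ≤ ‖G φ‖ ^ 2 := by
    intro φ
    have : ‖F φ + φ‖ ^ 2 = ‖F φ‖ ^ 2 + 2 * ((inner ℂ (F φ) φ : ℂ)).re + ‖φ‖ ^ 2 :=
      norm_add_sq (𝕜 := ℂ) _ _
    rw [hGapp, this]
    have h0 := hFre φ
    rw [aux_re_symm] at h0
    nlinarith [sq_nonneg ‖F φ‖]
  have hGinv_norm : ∀ x : V, ‖Ginv x‖ ≤ ‖x‖ := by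
    intro x
    have h := hplus (Ginv x)
    rw [hGGinv_app x] at h
    exact (pow_le_pow_iff_left₀ (norm_nonneg _) (norm_nonneg _) two_ne_zero).1 h
  -- A = (F - 1) * Ginv is a strict contraction pointwise
  set A : V →L[ℂ] V := (F - 1) * Ginv with hAdef
  have hminus : ∀ φ : V, φ ≠ 0 → ‖(F - 1) φ‖ ^ 2 < ‖G φ‖ ^ 2 := by
    intro φ hφ
    have h1 : ‖F φ - φ‖ ^ 2 = ‖F φ‖ ^ 2 - 2 * ((inner ℂ (F φ) φ : ℂ)).re + ‖φ‖ ^ 2 :=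
      norm_sub_sq (𝕜 := ℂ) _ _
    have h2 : ‖F φ + φ‖ ^ 2 = ‖F φ‖ ^ 2 + 2 * ((inner ℂ (F φ) φ : ℂ)).re + ‖φ‖ ^ 2 :=
      norm_add_sq (𝕜 := ℂ) _ _
    have h3 : 0 < ((inner ℂ (F φ) φ : ℂ)).re := by
      rw [aux_re_symm]; exact hF φ hφ
    have h4 : (F - 1) φ = F φ - φ := by simp
    rw [h4, hGapp, h1, h2]
    linarith
  have hAx : ∀ x : V, x ≠ 0 → ‖A x‖ < ‖x‖ := by
    intro x hx
    have hφ : Ginv x ≠ 0 := by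
      intro h0
      apply hx
      rw [← hGGinv_app x, h0, map_zero]
    have h5 : A x = (F - 1) (Ginv x) := by
      simp [hAdef, ContinuousLinearMap.mul_apply]
    have h6 := hminus (Ginv x) hφ
    rw [hGGinv_app x] at h6
    rw [h5]
    exact lt_of_pow_lt_pow_left₀ 2 (norm_nonneg x) h6
  -- 1 - w • A is a unit for ‖w‖ ≤ 1
  have hwunit : ∀ w : ℂ, ‖w‖ ≤ 1 → IsUnit ((1 : V →L[ℂ] V) - w • A) := by
    intro w hw
    apply aux_isUnit
    intro v hv
    by_contra hv0
    have h7 : v = w • A v := by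
      have : v - w • A v = 0 := by
        simpa [ContinuousLinearMap.sub_apply, ContinuousLinearMap.smul_apply] using hv
      linear_combination (norm := abel) this
    have h8 : ‖v‖ ≤ ‖A v‖ := by
      calc ‖v‖ = ‖w • A v‖ := by rw [← h7]
      _ = ‖w‖ * ‖A v‖ := norm_smul _ _
      _ ≤ 1 * ‖A v‖ := by
          exact mul_le_mul_of_nonneg_right hw (norm_nonneg _)
      _ = ‖A v‖ := one_mul _
    exact absurd h8 (not_le.2 (hAx v hv0))
  -- the analytic function f
  set f : ℂ → ℂ := fun w => (1 - w) * (innerSL ℂ ψ) ((Ginv * Ring.inverse (1 - w • A)) ψ)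
    with hfdef
  have hdiff : ∀ w ∈ Metric.closedBall (0:ℂ) 1, DifferentiableAt ℂ f w := by
    intro w hw
    rw [Metric.mem_closedBall, dist_zero_right] at hw
    have hB : DifferentiableAt ℂ (fun w : ℂ => Ring.inverse ((1 : V →L[ℂ] V) - w • A)) w := by
      apply DifferentiableAt.inverse
      · exact (differentiableAt_const _).sub (differentiableAt_id.smul_const A)
      · exact hwunit w hw
    have hM : DifferentiableAt ℂ (fun w : ℂ => Ginv * Ring.inverse ((1 : V →L[ℂ] V) - w • A)) w :=
      hB.const_mul Ginv
    have happ : DifferentiableAt ℂ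
        (fun w : ℂ => (Ginv * Ring.inverse ((1 : V →L[ℂ] V) - w • A)) ψ) w :=
      hM.clm_apply (differentiableAt_const ψ)
    exact ((differentiableAt_const (1:ℂ)).sub differentiableAt_id).mul
      ((innerSL ℂ ψ).differentiableAt.comp w happ)
  have hdco : DiffContOnCl ℂ f (Metric.ball (0:ℂ) 1) := by
    apply DifferentiableOn.diffContOnCl
    rw [closure_ball (0:ℂ) one_ne_zero]
    exact fun w hw => (hdiff w hw).differentiableWithinAt
  have hcauchy : (∮ z in C(0, 1), (z - 0)⁻¹ • f z) = (2 * (Real.pi:ℝ) * I : ℂ) • f 0 :=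
    hdco.circleIntegral_sub_inv_smul (Metric.mem_ball_self one_pos)
  have hunfold : (∮ z in C(0, 1), (z - 0)⁻¹ • f z)
      = ∫ θ in (0:ℝ)..2*Real.pi, Complex.I * f (Complex.exp (θ * I)) := by
    simp only [circleIntegral, deriv_circleMap, circleMap_zero, one_mul, sub_zero, smul_eq_mul,
      ofReal_one]
    apply intervalIntegral.integral_congr
    intro θ _
    have := Complex.exp_ne_zero ((θ:ℂ) * I)
    field_simp
  have hIint : (∫ θ in (0:ℝ)..2*Real.pi, f (Complex.exp (θ * I))) = (2 * (Real.pi:ℝ) : ℂ) * f 0 := by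
    have h9 : Complex.I * ∫ θ in (0:ℝ)..2*Real.pi, f (Complex.exp (θ * I))
        = Complex.I * ((2 * (Real.pi:ℝ) : ℂ) * f 0) := by
      rw [← intervalIntegral.integral_const_mul, ← hunfold, hcauchy, smul_eq_mul]
      ring
    exact mul_left_cancel₀ Complex.I_ne_zero h9
  have hflip : (∫ α in (0:ℝ)..2*Real.pi, f (Complex.exp (-α * I)))
      = ∫ θ in (0:ℝ)..2*Real.pi, f (Complex.exp (θ * I)) := by
    have h10 := intervalIntegral.integral_comp_sub_left
      (fun x : ℝ => f (Complex.exp (x * I))) (2*Real.pi) (a := 0) (b := 2*Real.pi)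
    simp only [sub_self, sub_zero] at h10
    rw [← h10]
    apply intervalIntegral.integral_congr
    intro α _
    show f (Complex.exp (-↑α * I)) = f (Complex.exp (↑(2*Real.pi - α) * I))
    congr 1
    rw [show ((2*Real.pi - α : ℝ) : ℂ) * I = 2*Real.pi*I + -(α:ℂ)*I from by push_cast; ring,
      Complex.exp_add, Complex.exp_two_pi_mul_I, one_mul]
  -- pointwise identity of the integrands on (0, 2π)
  have hpoint : Set.EqOn (fun α : ℝ =>
      (inner ℂ ψ ((Ring.inverse
          (F - (Complex.I * (Real.cot (α / 2) : ℂ)) • (1 : V →L[ℂ] V))) ψ) : ℂ))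
      (fun α : ℝ => f (Complex.exp (-↑α * I))) (Set.Ioo (0:ℝ) (2*Real.pi)) := by
    intro α hα
    obtain ⟨hα0, hα2π⟩ := hα
    have hπ := Real.pi_pos
    set t : ℂ := ((Real.cot (α/2) : ℝ) : ℂ) with htdef
    set z : ℂ := Complex.exp (↑α * I) with hzdef
    set w : ℂ := Complex.exp (-↑α * I) with hwdef
    have hzw : z * w = 1 := by
      rw [hzdef, hwdef, ← Complex.exp_add, show ((α:ℂ)*I + -↑α*I) = 0 by ring, Complex.exp_zero]
    have hwnorm : ‖w‖ = 1 := by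
      have h13 := Complex.norm_exp_ofReal_mul_I (-α)
      rw [hwdef]
      simpa [Complex.ofReal_neg] using h13
    have hz1 : z ≠ 1 := by
      intro h
      rw [hzdef, Complex.exp_eq_one_iff] at h
      obtain ⟨n, hn⟩ := h
      have hn' : (α : ℂ) = (n : ℂ) * (2*(Real.pi:ℂ)) := by
        apply mul_right_cancel₀ Complex.I_ne_zero
        rw [hn]; ring
      have hnr : α = (n : ℝ) * (2*Real.pi) := by exact_mod_cast hn'
      have hn0 : (0:ℝ) < (n:ℝ) := by nlinarith
      have hn1 : (n:ℝ) < 1 := by nlinarith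
      have hn0' : (0:ℤ) < n := by exact_mod_cast hn0
      have hn1' : n < 1 := by exact_mod_cast hn1
      omega
    have hzsub : z - 1 ≠ 0 := sub_ne_zero.2 hz1
    have hsin : Real.sin (α/2) ≠ 0 :=
      ne_of_gt (Real.sin_pos_of_pos_of_lt_pi (by linarith) (by linarith))
    have hkey : (Complex.I * t) * (z - 1) = -(z + 1) := aux_cot_identity hsin
    -- F - (I t) 1 is a unit
    have hTu : IsUnit (F - (Complex.I * t) • (1 : V →L[ℂ] V)) := by
      apply aux_isUnit
      intro v hv
      by_contra hv0
      have hFv : F v = (Complex.I * t) • v := by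
        have h14 : F v - (Complex.I * t) • v = 0 := by
          simpa [ContinuousLinearMap.sub_apply, ContinuousLinearMap.smul_apply,
            ContinuousLinearMap.one_apply] using hv
        have := sub_eq_zero.1 h14
        exact this
      have h15 := hF v hv0
      have hvv : (inner ℂ v v : ℂ) = (((‖v‖^2 : ℝ)) : ℂ) := by
        have := inner_self_eq_norm_sq_to_K (𝕜 := ℂ) v
        exact_mod_cast this
      rw [hFv, inner_smul_right, hvv, htdef] at h15
      simp only [Complex.mul_re, Complex.mul_im, Complex.I_re, Complex.I_im,
        Complex.ofReal_re, Complex.ofReal_im] at h15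
      norm_num at h15
    have hBu : IsUnit ((1 : V →L[ℂ] V) - w • A) := hwunit w (le_of_eq hwnorm)
    set Binv : V →L[ℂ] V := Ring.inverse ((1 : V →L[ℂ] V) - w • A) with hBdef
    have hBB : ((1 : V →L[ℂ] V) - w • A) * Binv = 1 := Ring.mul_inverse_cancel _ hBu
    have hAG : A * G = F - 1 := by rw [hAdef, mul_assoc, hGinvG, mul_one]
    have step1 : (z - 1) • (F - (Complex.I * t) • (1 : V →L[ℂ] V))
        = (z • (1 : V →L[ℂ] V) - A) * G := by
      have h16 : (z • (1 : V →L[ℂ] V) - A) * G = z • G - (F - 1) := by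
        rw [sub_mul, smul_mul_assoc, one_mul, hAG]
      rw [h16, hGdef]
      have hsc : (z - 1) * (Complex.I * t) = -(z+1) := by linear_combination hkey
      rw [smul_sub, smul_smul, hsc]
      module
    have hzA : z • ((1 : V →L[ℂ] V) - w • A) = z • (1 : V →L[ℂ] V) - A := by
      rw [smul_sub, smul_smul, hzw, one_smul]
    have hmain : (F - (Complex.I * t) • (1 : V →L[ℂ] V)) * ((1-w) • (Ginv * Binv)) = 1 := by
      apply smul_right_injective (V →L[ℂ] V) hzsub
      show (z - 1) • _ = (z - 1) • _
      calc (z - 1) • ((F - (Complex.I * t) • (1 : V →L[ℂ] V)) * ((1-w) • (Ginv * Binv)))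
          = ((z-1) • (F - (Complex.I * t) • (1 : V →L[ℂ] V))) * ((1-w) • (Ginv * Binv)) :=
            (smul_mul_assoc _ _ _).symm
        _ = ((z • (1 : V →L[ℂ] V) - A) * G) * ((1-w) • (Ginv * Binv)) := by rw [step1]
        _ = (1-w) • ((z • (1 : V →L[ℂ] V) - A) * (G * (Ginv * Binv))) := by
            rw [mul_smul_comm, mul_assoc]
        _ = (1-w) • ((z • (1 : V →L[ℂ] V) - A) * Binv) := by
            rw [← mul_assoc G, hGGinv, one_mul]
        _ = (1-w) • ((z • ((1 : V →L[ℂ] V) - w • A)) * Binv) := by rw [hzA]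
        _ = ((1-w) * z) • (((1 : V →L[ℂ] V) - w • A) * Binv) := by
            rw [smul_mul_assoc, smul_smul]
        _ = ((1-w) * z) • (1 : V →L[ℂ] V) := by rw [hBB]
        _ = (z - 1) • (1 : V →L[ℂ] V) := by
            rw [show (1-w) * z = z - 1 by linear_combination -hzw]
    have hinv : Ring.inverse (F - (Complex.I * t) • (1 : V →L[ℂ] V))
        = (1-w) • (Ginv * Binv) := aux_ring_inverse_eq hTu hmain
    show (inner ℂ ψ ((Ring.inverse (F - (Complex.I * t) • (1 : V →L[ℂ] V))) ψ) : ℂ)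
        = f w
    rw [hinv, ContinuousLinearMap.smul_apply, inner_smul_right]
    simp only [hfdef, innerSL_apply_apply, hBdef]
  -- assemble
  have hIoo : (∫ α in Set.Ioo (0 : ℝ) (2 * Real.pi),
      (inner ℂ ψ ((Ring.inverse
          (F - (Complex.I * (Real.cot (α / 2) : ℂ)) • (1 : V →L[ℂ] V))) ψ) : ℂ))
      = ∫ α in Set.Ioo (0:ℝ) (2*Real.pi), f (Complex.exp (-↑α * I)) :=
    setIntegral_congr_fun measurableSet_Ioo hpoint
  have hIoo2 : (∫ α in Set.Ioo (0:ℝ) (2*Real.pi), f (Complex.exp (-↑α * I)))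
      = ∫ α in (0:ℝ)..2*Real.pi, f (Complex.exp (-↑α * I)) := by
    rw [intervalIntegral.integral_of_le (by positivity), integral_Ioc_eq_integral_Ioo]
  rw [hIoo, hIoo2, hflip, hIint]
  have hf0 : f 0 = innerSL ℂ ψ (Ginv ψ) := by
    simp [hfdef, Ring.inverse_one]
  rw [hf0]
  have hb : ‖innerSL ℂ ψ (Ginv ψ)‖ ≤ ‖ψ‖^2 := by
    rw [innerSL_apply_apply]
    calc ‖(inner ℂ ψ (Ginv ψ) : ℂ)‖ ≤ ‖ψ‖ * ‖Ginv ψ‖ := norm_inner_le_norm _ _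
      _ ≤ ‖ψ‖ * ‖ψ‖ := by
          exact mul_le_mul_of_nonneg_left (hGinv_norm ψ) (norm_nonneg ψ)
      _ = ‖ψ‖^2 := (sq ‖ψ‖).symm
  rw [norm_mul, norm_mul]
  have h2π : ‖(2:ℂ)‖ * ‖(Real.pi : ℂ)‖ = 2 * Real.pi := by
    simp [abs_of_pos Real.pi_pos]
  rw [h2π]
  exact mul_le_mul_of_nonneg_left hb (by positivity)
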